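/- Let q, δ ∈ ℝⁿ with ‖δ‖ ≤ Υ and ‖q‖ > 2Υ, let a, b > 0, μ > 2, and define F(q,δ) = qᵀδ (a‖q+δ‖^(2/μ) + b‖q+δ‖^(-2/μ)). Then F(q,δ) ≥ -Υ(a‖q‖^(1+2/μ) + 2^(2/μ) b ‖q‖^(1-2/μ)). -/

import Mathlib

/-- Lower bound on `F(q,δ) = ⟪q,δ⟫ (a‖q+δ‖^(2/μ) + b‖q+δ‖^(-2/μ))` when
`‖δ‖ ≤ Υ` and `‖q‖ > 2Υ`. -/
theorem F_lower_bound
    (n : ℕ) (q δ : EuclideanSpace ℝ (Fin n)) (Υ a b μ : ℝ)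
    (hΥ : 0 < Υ) (hδ : ‖δ‖ ≤ Υ) (hq : 2 * Υ < ‖q‖)
    (ha : 0 < a) (hb : 0 < b) (hμ : 2 < μ) :
    -Υ * (a * ‖q‖ ^ (1 + 2 / μ) + 2 ^ (2 / μ) * b * ‖q‖ ^ (1 - 2 / μ)) ≤
      (inner ℝ q δ : ℝ) * (a * ‖q + δ‖ ^ (2 / μ) + b * ‖q + δ‖ ^ (-(2 / μ))) := by
  set α : ℝ := 2 / μ with hα
  have hμ0 : (0:ℝ) < μ := by linarith
  have hα0 : 0 < α := by positivity
  have hα1 : α < 1 := by rw [hα, div_lt_one hμ0]; linarith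
  set Q : ℝ := ‖q‖ with hQdef
  set s : ℝ := ‖q + δ‖ with hsdef
  set t : ℝ := (inner ℝ q δ : ℝ) with htdef
  set d : ℝ := ‖δ‖ with hddef
  have hd0 : 0 ≤ d := norm_nonneg _
  have hQ0 : 0 < Q := by linarith [mul_pos two_pos hΥ]
  have hsge : Q - d ≤ s := by
    have h : ‖q‖ ≤ ‖q + δ‖ + ‖δ‖ := by
      calc ‖q‖ = ‖(q + δ) - δ‖ := by rw [add_sub_cancel_right]
      _ ≤ ‖q + δ‖ + ‖δ‖ := norm_sub_le _ _
    simpa using h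
  have hsle : s ≤ Q + d := norm_add_le q δ
  have hs0 : 0 < s := by linarith
  have htabs : |t| ≤ Q * d := abs_real_inner_le_norm q δ
  have hsq : s ^ 2 = Q ^ 2 + 2 * t + d ^ 2 := norm_add_sq_real q δ
  -- rpow positivity facts
  have hQα : (0:ℝ) < Q ^ α := Real.rpow_pos_of_pos hQ0 α
  have hsα : (0:ℝ) < s ^ α := Real.rpow_pos_of_pos hs0 α
  have hsnα : (0:ℝ) < s ^ (-α) := Real.rpow_pos_of_pos hs0 (-α)
  have hQ1α : Q ^ (1 + α) = Q * Q ^ α := by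
    rw [Real.rpow_add hQ0, Real.rpow_one]
  have hQ1mα : Q ^ (1 - α) = Q * Q ^ (-α) := by
    rw [sub_eq_add_neg, Real.rpow_add hQ0, Real.rpow_one]
  have hQnα : (0:ℝ) < Q ^ (-α) := Real.rpow_pos_of_pos hQ0 (-α)
  have h2α : (0:ℝ) < (2:ℝ) ^ α := Real.rpow_pos_of_pos two_pos α
  rcases le_or_gt 0 t with ht | ht
  · -- t ≥ 0 : RHS nonneg, LHS nonpos
    have hRHS : 0 ≤ t * (a * s ^ α + b * s ^ (-α)) := by positivity
    have hLHS : -Υ * (a * Q ^ (1 + α) + 2 ^ α * b * Q ^ (1 - α)) ≤ 0 := by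
      have h1 : (0:ℝ) < Q ^ (1 + α) := Real.rpow_pos_of_pos hQ0 _
      have h2 : (0:ℝ) < Q ^ (1 - α) := Real.rpow_pos_of_pos hQ0 _
      nlinarith [mul_pos ha h1, mul_pos (mul_pos h2α hb) h2]
    linarith
  · -- t < 0
    have htQ : -t ≤ Q * Υ := by
      have : -t ≤ Q * d := by
        have := neg_abs_le t; linarith [le_abs_self t, htabs]
      nlinarith
    -- Claim A : (-t) * s^α ≤ Υ * Q^(1+α)
    have claimA : (-t) * s ^ α ≤ Υ * Q ^ (1 + α) := by
      rcases le_or_gt s Q with hsQ | hsQ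
      · have h1 : s ^ α ≤ Q ^ α := Real.rpow_le_rpow hs0.le hsQ hα0.le
        calc (-t) * s ^ α ≤ (Q * Υ) * Q ^ α := by
              apply mul_le_mul htQ h1 hsα.le (by positivity)
        _ = Υ * Q ^ (1 + α) := by rw [hQ1α]; ring
      · -- s > Q : then -2t < d², so -t ≤ d²/2 ≤ Υ·Q/4 ; s ≤ (3/2)Q
        have hQs2 : Q ^ 2 < s ^ 2 := by
          exact pow_lt_pow_left₀ hsQ hQ0.le (by norm_num)
        have ht2 : -t ≤ d ^ 2 / 2 := by linarith
        have hdΥ2 : d ^ 2 ≤ Υ ^ 2 := pow_le_pow_left₀ hd0 hδ 2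
        have hΥQ : Υ ^ 2 ≤ Υ * Q / 2 := by
          have h := mul_le_mul_of_nonneg_left (show Υ ≤ Q / 2 by linarith) hΥ.le
          have h2 : Υ ^ 2 = Υ * Υ := sq Υ
          linarith
        have htsmall : -t ≤ Υ * Q / 4 := by linarith
        have hs32 : s ≤ 3 / 2 * Q := by linarith
        have h1 : s ^ α ≤ (3 / 2 * Q) ^ α := Real.rpow_le_rpow hs0.le hs32 hα0.le
        have h2 : (3 / 2 * Q : ℝ) ^ α = (3/2:ℝ) ^ α * Q ^ α :=
          Real.mul_rpow (by norm_num) hQ0.le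
        have h3 : ((3:ℝ)/2) ^ α ≤ 3/2 := by
          calc ((3:ℝ)/2) ^ α ≤ ((3:ℝ)/2) ^ (1:ℝ) :=
                Real.rpow_le_rpow_of_exponent_le (by norm_num) hα1.le
          _ = 3/2 := Real.rpow_one _
        have h4 : s ^ α ≤ 3/2 * Q ^ α := by
          rw [h2] at h1
          calc s ^ α ≤ (3/2:ℝ) ^ α * Q ^ α := h1
          _ ≤ 3/2 * Q ^ α := mul_le_mul_of_nonneg_right h3 hQα.le
        calc (-t) * s ^ α ≤ (Υ * Q / 4) * (3/2 * Q ^ α) := by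
              apply mul_le_mul htsmall h4 hsα.le (by positivity)
        _ ≤ Υ * Q ^ (1 + α) := by
              rw [hQ1α]
              have hpos : (0:ℝ) ≤ Υ * Q * Q ^ α := by positivity
              have e1 : (Υ * Q / 4) * (3/2 * Q ^ α) = 3/8 * (Υ * Q * Q ^ α) := by ring
              have e2 : Υ * (Q * Q ^ α) = 1 * (Υ * Q * Q ^ α) := by ring
              rw [e1, e2]
              exact mul_le_mul_of_nonneg_right (by norm_num) hpos
    -- Claim B : (-t) * s^(-α) ≤ 2^α * Υ * Q^(1-α)
    have claimB : (-t) * s ^ (-α) ≤ 2 ^ α * Υ * Q ^ (1 - α) := by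
      have hsge2 : Q / 2 ≤ s := by linarith
      have h1 : s ^ (-α) ≤ (Q / 2) ^ (-α) :=
        Real.rpow_le_rpow_of_nonpos (by positivity) hsge2 (by linarith)
      have h2 : (Q / 2 : ℝ) ^ (-α) = 2 ^ α * Q ^ (-α) := by
        rw [Real.div_rpow hQ0.le (by norm_num : (0:ℝ) ≤ 2), div_eq_mul_inv,
          ← Real.rpow_neg (by norm_num : (0:ℝ) ≤ 2), neg_neg]
        ring
      calc (-t) * s ^ (-α) ≤ (Q * Υ) * (2 ^ α * Q ^ (-α)) := by
            rw [← h2]; exact mul_le_mul htQ h1 hsnα.le (by positivity)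
      _ = 2 ^ α * Υ * Q ^ (1 - α) := by rw [hQ1mα]; ring
    linarith [mul_le_mul_of_nonneg_left claimA ha.le,
      mul_le_mul_of_nonneg_left claimB hb.le]
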